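/- Let G = (A ∪ P, E) be a bipartite graph, M a maximum matching in G, and let H be obtained from G by adding a new vertex a to the A-side together with edges from a to a set N ⊆ P of neighbors. If every vertex of N is odd with respect to M in G, then M is a maximum matching of H, every vertex of G has the same label (even, odd, or unreachable) with respect to M in H as it has in G, and the new vertex a is even with respect to M in H. -/

import Mathlib

open SimpleGraph

variable {V : Type*}

/-- `M` is a matching in the graph `G`: a set of edges of `G` no two of which
share a vertex. -/
def IsMatchingIn (G : SimpleGraph V) (M : Set (Sym2 V)) : Prop :=
  M ⊆ G.edgeSet ∧ ∀ e ∈ M, ∀ f ∈ M, e ≠ f → ∀ v : V, v ∈ e → v ∉ f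

/-- A vertex `v` is matched (covered) by the matching `M`. -/
def IsMatchedBy (M : Set (Sym2 V)) (v : V) : Prop :=
  ∃ e ∈ M, v ∈ e

/-- The list of edges of a path given as a list of vertices. -/
def pathEdges (p : List V) : List (Sym2 V) :=
  (p.zip p.tail).map fun q => s(q.1, q.2)

/-- `p` is an alternating path from `u` to `v` in `G` with respect to the matching `M`:
its consecutive vertices are adjacent in `G`, it repeats no vertex, and its edges
alternate between edges in `M` and edges not in `M`. -/
def IsAltPath (G : SimpleGraph V) (M : Set (Sym2 V)) (u v : V) (p : List V) : Prop :=
  p.Chain' G.Adj ∧ p.Nodup ∧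
    (pathEdges p).Chain' (fun e f => (e ∈ M ↔ f ∉ M)) ∧
    p.head? = some u ∧ p.getLast? = some v

/-- `v` is even with respect to `M`: there is an even-length alternating path from
an `M`-unmatched vertex to `v`. -/
def EvenVtx (G : SimpleGraph V) (M : Set (Sym2 V)) (v : V) : Prop :=
  ∃ u p, ¬ IsMatchedBy M u ∧ IsAltPath G M u v p ∧ Even (pathEdges p).length

/-- `v` is odd with respect to `M`: there is an odd-length alternating path from
an `M`-unmatched vertex to `v`. -/
def OddVtx (G : SimpleGraph V) (M : Set (Sym2 V)) (v : V) : Prop :=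
  ∃ u p, ¬ IsMatchedBy M u ∧ IsAltPath G M u v p ∧ Odd (pathEdges p).length

/-- `v` is unreachable with respect to `M`: there is no alternating path from any
`M`-unmatched vertex to `v`. -/
def UnreachableVtx (G : SimpleGraph V) (M : Set (Sym2 V)) (v : V) : Prop :=
  ¬ ∃ u p, ¬ IsMatchedBy M u ∧ IsAltPath G M u v p

/-- `M` is a maximum (cardinality) matching in `G`. -/
def IsMaxMatching (G : SimpleGraph V) (M : Set (Sym2 V)) : Prop :=
  IsMatchingIn G M ∧ ∀ N, IsMatchingIn G N → N.ncard ≤ M.ncard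

/-- `G` is bipartite with the two sides given by `side`. -/
def IsBipartiteWith (G : SimpleGraph V) (side : V → Bool) : Prop :=
  ∀ u v, G.Adj u v → side u ≠ side v

namespace AddVtx

lemma chain'_iff_getElem {α : Type*} {R : α → α → Prop} {l : List α} :
    List.Chain' R l ↔ ∀ (i : ℕ) (h : i + 1 < l.length),
      R (l[i]'(by omega)) (l[i+1]'h) := by
  refine List.isChain_iff_getElem.trans ?_
  constructor
  · intro H i h; exact H i (by omega)
  · intro H i h; exact H i (by omega)

lemma pathEdges_length (p : List V) : (pathEdges p).length = p.length - 1 := by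
  simp [pathEdges]

lemma pathEdges_getElem (p : List V) (i : ℕ) (h : i < (pathEdges p).length) :
    (pathEdges p)[i] =
      s(p[i]'(by rw [pathEdges_length] at h; omega),
        p[i+1]'(by rw [pathEdges_length] at h; omega)) := by
  have h' : i < (p.zip p.tail).length := by
    simpa [pathEdges] using h
  have ht : i < p.tail.length := by
    simp only [List.length_zip] at h'; omega
  simp only [pathEdges, List.getElem_map, List.getElem_zip]
  rw [List.getElem_tail]

lemma pathEdges_cons (a b : V) (t : List V) :
    pathEdges (a :: b :: t) = s(a, b) :: pathEdges (b :: t) := by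
  simp [pathEdges]

lemma head?_getElem {p : List V} {u : V} (h : p.head? = some u) :
    ∃ hl : 0 < p.length, p[0] = u := by
  cases p with
  | nil => simp at h
  | cons x t => simp_all

lemma getLast?_getElem {p : List V} {v : V} (h : p.getLast? = some v) :
    ∃ hl : 0 < p.length, p[p.length - 1]'(by omega) = v := by
  have h0 : p ≠ [] := by rintro rfl; simp at h
  have hl : 0 < p.length := List.length_pos_iff.mpr h0
  refine ⟨hl, ?_⟩
  rw [List.getLast?_eq_getElem?] at h
  rw [List.getElem?_eq_getElem (by omega)] at h
  simpa using h

end AddVtx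

namespace AddVtx

variable {G : SimpleGraph V} {side : V → Bool} {M : Set (Sym2 V)}

/-- The directed-edge relation for alternating walks with start side `c`. -/
def Rrel (M : Set (Sym2 V)) (side : V → Bool) (c : Bool) (x y : V) : Prop :=
  s(x, y) ∈ M ↔ side x ≠ c

lemma sideAt (hbip : IsBipartiteWith G side) {p : List V} (hp : List.Chain' G.Adj p) :
    ∀ (i : ℕ) (h : i < p.length),
      (side (p[i]'h) = side (p[0]'(by omega)) ↔ Even i) := by
  intro i
  induction i with
  | zero => intro h; simp
  | succ n ih =>
    intro h
    have hn := ih (by omega)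
    have hadj : G.Adj (p[n]'(by omega)) (p[n+1]'h) :=
      chain'_iff_getElem.mp hp n h
    have hne := hbip _ _ hadj
    have hpar : Even (n+1) ↔ ¬ Even n := by simp [Nat.even_add_one]
    rw [hpar, ← hn]
    cases hb : side (p[n+1]'h) <;> cases hc : side (p[0]'(by omega)) <;>
      cases hd : side (p[n]'(by omega)) <;> simp_all

lemma parity_iff (hbip : IsBipartiteWith G side) {p : List V} {u v : V}
    (hp : List.Chain' G.Adj p) (hu : p.head? = some u) (hv : p.getLast? = some v) :
    (Even (pathEdges p).length ↔ side u = side v) := by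
  obtain ⟨h0, hu0⟩ := head?_getElem hu
  obtain ⟨_, hvl⟩ := getLast?_getElem hv
  have := sideAt hbip hp (p.length - 1) (by omega)
  rw [hvl, hu0] at this
  rw [pathEdges_length, ← this]
  exact ⟨fun h => h ▸ rfl, fun h => h ▸ rfl⟩

/-- An alternation chain whose first-edge membership status matches `Q`
determines membership of all edges by parity. -/
lemma alt_edges {p : List V}
    (halt : (pathEdges p).Chain' (fun e f => (e ∈ M ↔ f ∉ M)))
    (Q : Prop)
    (hQ : ∀ h : 1 < p.length, (s(p[0]'(by omega), p[1]'h) ∈ M ↔ Q)) :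
    ∀ (i : ℕ) (h : i + 1 < p.length),
      (s(p[i]'(by omega), p[i+1]'h) ∈ M ↔ (Even i ↔ Q)) := by
  intro i
  induction i with
  | zero => intro h; simpa using hQ h
  | succ n ih =>
    intro h
    have hn := ih (by omega)
    have hch := chain'_iff_getElem.mp halt n
      (by rw [pathEdges_length]; omega)
    rw [pathEdges_getElem _ _ (by rw [pathEdges_length]; omega),
        pathEdges_getElem _ _ (by rw [pathEdges_length]; omega)] at hch
    rw [hn] at hch
    have : Even (n+1) ↔ ¬ Even n := by simp [Nat.even_add_one]
    rw [this]
    tauto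

lemma rchain_iff_parity (hbip : IsBipartiteWith G side) {p : List V}
    (hp : List.Chain' G.Adj p) (c : Bool) :
    List.Chain' (Rrel M side c) p ↔
      ∀ (i : ℕ) (h : i + 1 < p.length),
        (s(p[i]'(by omega), p[i+1]'h) ∈ M ↔
          (Even i ↔ side (p[0]'(by omega)) ≠ c)) := by
  rw [chain'_iff_getElem]
  refine forall_congr' fun i => forall_congr' fun h => ?_
  unfold Rrel
  have hside := sideAt hbip hp i (by omega)
  constructor
  · intro hr
    rw [hr]
    cases h1 : side (p[i]'(by omega)) <;> cases h2 : side (p[0]'(by omega)) <;>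
      cases c <;> simp_all
  · intro hr
    rw [hr]
    cases h1 : side (p[i]'(by omega)) <;> cases h2 : side (p[0]'(by omega)) <;>
      cases c <;> simp_all

lemma rchain_of_alt (hbip : IsBipartiteWith G side) {p : List V}
    (hp : List.Chain' G.Adj p)
    (halt : (pathEdges p).Chain' (fun e f => (e ∈ M ↔ f ∉ M))) (c : Bool)
    (hQ : ∀ h : 1 < p.length,
      (s(p[0]'(by omega), p[1]'h) ∈ M ↔ side (p[0]'(by omega)) ≠ c)) :
    List.Chain' (Rrel M side c) p := by
  rcases Nat.lt_or_ge 1 p.length with hl | hl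
  · rw [rchain_iff_parity hbip hp c]
    have key := alt_edges halt (side (p[0]'(by omega)) ≠ c) (fun h => hQ h)
    intro i h
    exact key i h
  · rw [chain'_iff_getElem]
    intro i h
    omega

lemma alt_of_rchain (hbip : IsBipartiteWith G side) {p : List V}
    (hp : List.Chain' G.Adj p) {c : Bool}
    (hrc : List.Chain' (Rrel M side c) p) :
    (pathEdges p).Chain' (fun e f => (e ∈ M ↔ f ∉ M)) := by
  rw [rchain_iff_parity hbip hp c] at hrc
  rw [chain'_iff_getElem]
  intro i h
  have hl : i + 2 < p.length := by
    rw [pathEdges_length] at h; omega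
  rw [pathEdges_getElem _ _ (by rw [pathEdges_length] at h ⊢; omega),
      pathEdges_getElem _ _ (by rw [pathEdges_length] at h ⊢; omega)]
  have h1 := hrc i (by omega)
  have h2 := hrc (i+1) (by omega)
  rw [h1, h2]
  have : Even (i+1) ↔ ¬ Even i := by simp [Nat.even_add_one]
  tauto

/-- Alternating-path-from-unmatched to R-chain. -/
lemma rchain_of_altpath (hbip : IsBipartiteWith G side) {p : List V} {u v : V}
    (hpath : IsAltPath G M u v p) (hum : ¬ IsMatchedBy M u) :
    List.Chain' (Rrel M side (side u)) p := by
  obtain ⟨hadj, _, halt, hu, _⟩ := hpath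
  obtain ⟨h0, hu0⟩ := head?_getElem hu
  refine rchain_of_alt hbip hadj halt (side u) fun h => ?_
  rw [hu0]
  simp only [ne_eq, not_true_eq_false, iff_false]
  intro hmem
  exact hum ⟨_, hmem, by rw [← hu0]; exact Sym2.mem_mk_left _ _⟩

end AddVtx

namespace AddVtx

lemma splice_chain {α : Type*} {T : α → α → Prop} {p : List α} {i j : ℕ}
    (hj : j < p.length) (hlt : i < j) (hij : p[i]'(by omega) = p[j]'hj)
    (hT : List.Chain' T p) :
    List.Chain' T (p.take (i+1) ++ p.drop (j+1)) := by
  refine List.isChain_append.mpr ?_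
  refine ⟨hT.take _, hT.drop _, ?_⟩
  intro x hx y hy
  rw [Option.mem_def, List.getLast?_eq_getElem?, List.length_take] at hx
  have hmin : min (i+1) p.length - 1 = i := by omega
  rw [hmin, List.getElem?_take, if_pos (Nat.lt_succ_self i),
    List.getElem?_eq_getElem (by omega : i < p.length), Option.some_inj] at hx
  rw [Option.mem_def, List.head?_drop] at hy
  by_cases hjl : j + 1 < p.length
  · rw [List.getElem?_eq_getElem hjl, Option.some_inj] at hy
    rw [← hx, ← hy, hij]
    exact chain'_iff_getElem.mp hT j hjl
  · rw [List.getElem?_eq_none (by omega)] at hy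
    simp at hy

lemma splice_head {α : Type*} {p : List α} {i j : ℕ}
    (hj : j < p.length) :
    (p.take (i+1) ++ p.drop (j+1)).head? = p.head? := by
  rw [List.head?_append, List.head?_take, if_neg (Nat.succ_ne_zero i)]
  have : p ≠ [] := by intro h; subst h; simp at hj
  cases hp : p.head? with
  | none => exact absurd (List.head?_eq_none_iff.mp hp) this
  | some z => simp

lemma splice_getLast {α : Type*} {p : List α} {i j : ℕ}
    (hj : j < p.length) (hlt : i < j) (hij : p[i]'(by omega) = p[j]'hj) :
    (p.take (i+1) ++ p.drop (j+1)).getLast? = p.getLast? := by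
  rw [List.getLast?_append]
  by_cases hjl : j + 1 < p.length
  · have hne : p.drop (j+1) ≠ [] := by
      intro h
      have := (List.length_drop (i := j+1) (l := p)) ▸ congrArg List.length h
      simp at this; omega
    rw [List.getLast?_eq_getElem? (l := p.drop (j+1)), List.length_drop,
      List.getElem?_drop, List.getLast?_eq_getElem? (l := p)]
    have : j + 1 + (p.length - (j + 1) - 1) = p.length - 1 := by omega
    rw [this]
    cases hp : p[p.length - 1]? with
    | none =>
      rw [List.getElem?_eq_none_iff] at hp; omega
    | some z => simp
  · have hj1 : j = p.length - 1 := by omega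
    have hdrop : p.drop (j+1) = [] := by
      apply List.eq_nil_of_length_eq_zero
      rw [List.length_drop]; omega
    rw [hdrop]
    simp only [List.getLast?_nil, Option.none_or]
    rw [List.getLast?_eq_getElem?, List.length_take]
    have hmin : min (i+1) p.length - 1 = i := by omega
    rw [hmin, List.getElem?_take, if_pos (Nat.lt_succ_self i),
      List.getElem?_eq_getElem (by omega : i < p.length),
      List.getLast?_eq_getElem?,
      List.getElem?_eq_getElem (by omega : p.length - 1 < p.length)]
    rw [Option.some_inj]
    rw [hij]
    congr 1

lemma dedup {α : Type*} {R S : α → α → Prop} :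
    ∀ (n : ℕ) (p : List α), p.length ≤ n → List.Chain' R p → List.Chain' S p →
    ∃ q : List α, q.Nodup ∧ List.Chain' R q ∧ List.Chain' S q ∧
      q.head? = p.head? ∧ q.getLast? = p.getLast? := by
  intro n
  induction n with
  | zero =>
    intro p hlen _ _
    have : p = [] := List.length_eq_zero_iff.mp (by omega)
    subst this
    exact ⟨[], by simp [List.Chain', List.isChain_nil]⟩
  | succ n ih =>
    intro p hlen hR hS
    by_cases hnd : p.Nodup
    · exact ⟨p, hnd, hR, hS, rfl, rfl⟩
    · rw [List.nodup_iff_injective_get] at hnd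
      simp only [Function.Injective, not_forall] at hnd
      obtain ⟨i, j, hij, hne⟩ := hnd
      have hne' : (i : ℕ) ≠ (j : ℕ) := fun h => hne (Fin.ext h)
      have hget : ∀ (k l : Fin p.length), p.get k = p[(k:ℕ)]'k.2 := fun k l => rfl
      rcases Nat.lt_or_ge (i : ℕ) (j : ℕ) with hlt | hge
      · obtain ⟨q, hq⟩ : ∃ q : List α, q.length < p.length ∧ List.Chain' R q ∧
            List.Chain' S q ∧ q.head? = p.head? ∧ q.getLast? = p.getLast? :=
          ⟨p.take ((i:ℕ)+1) ++ p.drop ((j:ℕ)+1), by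
              rw [List.length_append, List.length_take, List.length_drop]
              have := j.2; omega,
            splice_chain j.2 hlt hij hR, splice_chain j.2 hlt hij hS,
            splice_head j.2, splice_getLast j.2 hlt hij⟩
        obtain ⟨hql, hqR, hqS, hqh, hqg⟩ := hq
        obtain ⟨r, h1, h2, h3, h4, h5⟩ := ih q (by omega) hqR hqS
        exact ⟨r, h1, h2, h3, h4.trans hqh, h5.trans hqg⟩
      · have hlt : (j : ℕ) < (i : ℕ) := by omega
        obtain ⟨q, hq⟩ : ∃ q : List α, q.length < p.length ∧ List.Chain' R q ∧
            List.Chain' S q ∧ q.head? = p.head? ∧ q.getLast? = p.getLast? :=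
          ⟨p.take ((j:ℕ)+1) ++ p.drop ((i:ℕ)+1), by
              rw [List.length_append, List.length_take, List.length_drop]
              have := i.2; omega,
            splice_chain i.2 hlt hij.symm hR, splice_chain i.2 hlt hij.symm hS,
            splice_head i.2, splice_getLast i.2 hlt hij.symm⟩
        obtain ⟨hql, hqR, hqS, hqh, hqg⟩ := hq
        obtain ⟨r, h1, h2, h3, h4, h5⟩ := ih q (by omega) hqR hqS
        exact ⟨r, h1, h2, h3, h4.trans hqh, h5.trans hqg⟩

end AddVtx

namespace AddVtx

variable {G : SimpleGraph V} {side : V → Bool} {M : Set (Sym2 V)}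

lemma chain'_imp₂ {α : Type*} {R S T : α → α → Prop} {l : List α}
    (h1 : List.Chain' R l) (h2 : List.Chain' S l)
    (h : ∀ x y, R x y → S x y → T x y) : List.Chain' T l := by
  rw [chain'_iff_getElem] at *
  exact fun i hi => h _ _ (h1 i hi) (h2 i hi)

/-- From an alternating walk (not necessarily vertex-disjoint) starting at an
unmatched vertex we get an alternating path with the same endpoints. -/
lemma walk_to_path (hbip : IsBipartiteWith G side) {p : List V} {u v : V} {c : Bool}
    (hadj : List.Chain' G.Adj p) (hrc : List.Chain' (Rrel M side c) p)
    (hu : p.head? = some u) (hv : p.getLast? = some v) :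
    ∃ q, IsAltPath G M u v q ∧ (Even (pathEdges q).length ↔ side u = side v) := by
  obtain ⟨q, hnd, hqadj, hqrc, hqh, hqg⟩ :=
    dedup p.length p le_rfl hadj hrc
  rw [hu] at hqh
  rw [hv] at hqg
  exact ⟨q, ⟨hqadj, hnd, alt_of_rchain hbip hqadj hqrc, hqh, hqg⟩,
    parity_iff hbip hqadj hqh hqg⟩

lemma evenVtx_of_walk (hbip : IsBipartiteWith G side) {p : List V} {u v : V} {c : Bool}
    (hadj : List.Chain' G.Adj p) (hrc : List.Chain' (Rrel M side c) p)
    (hu : p.head? = some u) (hv : p.getLast? = some v)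
    (hum : ¬ IsMatchedBy M u) (hsv : side v = side u) : EvenVtx G M v := by
  obtain ⟨q, hq, hpar⟩ := walk_to_path hbip hadj hrc hu hv
  exact ⟨u, q, hum, hq, hpar.mpr hsv.symm⟩

lemma oddVtx_of_walk (hbip : IsBipartiteWith G side) {p : List V} {u v : V} {c : Bool}
    (hadj : List.Chain' G.Adj p) (hrc : List.Chain' (Rrel M side c) p)
    (hu : p.head? = some u) (hv : p.getLast? = some v)
    (hum : ¬ IsMatchedBy M u) (hsv : side v ≠ side u) : OddVtx G M v := by
  obtain ⟨q, hq, hpar⟩ := walk_to_path hbip hadj hrc hu hv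
  refine ⟨u, q, hum, hq, Nat.not_even_iff_odd.mp fun h => hsv ?_⟩
  exact (hpar.mp h).symm

lemma evenVtx_of_unmatched {v : V} (hum : ¬ IsMatchedBy M v) : EvenVtx G M v :=
  ⟨v, [v], hum, ⟨by simp [List.Chain', List.isChain_singleton], by simp, by simp [pathEdges, List.Chain', List.isChain_nil], by simp, by simp⟩,
    by simp [pathEdges]⟩

end AddVtx

namespace AddVtx

variable {G : SimpleGraph V} {side : V → Bool} {M : Set (Sym2 V)}

lemma nodup_getElem_inj {α : Type*} {p : List α} (h : p.Nodup) {i j : ℕ}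
    (hi : i < p.length) (hj : j < p.length) (hij : p[i] = p[j]) : i = j := by
  have := List.nodup_iff_injective_get.mp h
    (show p.get ⟨i, hi⟩ = p.get ⟨j, hj⟩ from hij)
  exact Fin.mk.inj_iff.mp this

lemma card_filter_odd : ∀ k : ℕ, ((Finset.range k).filter (fun i => Odd i)).card = k / 2 := by
  intro k
  induction k with
  | zero => simp
  | succ k ih =>
    rw [Finset.range_add_one, Finset.filter_insert]
    by_cases h : Odd k
    · rw [if_pos h, Finset.card_insert_of_notMem (by simp), ih]
      obtain ⟨m, hm⟩ := h; omega
    · rw [if_neg h, ih]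
      rw [Nat.not_odd_iff_even] at h
      obtain ⟨m, hm⟩ := h; omega

lemma card_filter_even : ∀ k : ℕ, ((Finset.range k).filter (fun i => Even i)).card = (k+1) / 2 := by
  intro k
  induction k with
  | zero => simp
  | succ k ih =>
    rw [Finset.range_add_one, Finset.filter_insert]
    by_cases h : Even k
    · rw [if_pos h, Finset.card_insert_of_notMem (by simp), ih]
      obtain ⟨m, hm⟩ := h; omega
    · rw [if_neg h, ih]
      rw [Nat.not_even_iff_odd] at h
      obtain ⟨m, hm⟩ := h; omega

/-- Key lemma: an augmenting path yields a strictly bigger matching. -/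
lemma augment [Fintype V] (hbip : IsBipartiteWith G side)
    (hm : IsMatchingIn G M) {u v : V} {p : List V}
    (hpath : IsAltPath G M u v p) (hum : ¬ IsMatchedBy M u) (hvm : ¬ IsMatchedBy M v)
    (hodd : Odd (pathEdges p).length) :
    ∃ M' : Set (Sym2 V), IsMatchingIn G M' ∧ M.ncard < M'.ncard := by
  classical
  obtain ⟨hadj, hnd, halt, hu, hv⟩ := hpath
  obtain ⟨h0, hu0⟩ := head?_getElem hu
  obtain ⟨hl2, hv0⟩ := getLast?_getElem hv
  set n := p.length with hn
  have hn2 : 2 ≤ n := by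
    rw [pathEdges_length] at hodd
    obtain ⟨m, hm'⟩ := hodd; omega
  -- normal form for edge membership
  have hrc := rchain_of_altpath hbip ⟨hadj, hnd, halt, hu, hv⟩ hum
  rw [rchain_iff_parity hbip hadj] at hrc
  have hNF : ∀ (i : ℕ) (h : i + 1 < n), (s(p[i]'(by omega), p[i+1]'h) ∈ M ↔ Odd i) := by
    intro i h
    have := hrc i h
    rw [hu0] at this
    rw [this]
    rw [← Nat.not_even_iff_odd]
    tauto
  -- the edges of the path
  set e : ℕ → Sym2 V := fun i =>
    if h : i + 1 < n then s(p[i]'(by omega), p[i+1]'h) else s(u, u) with he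
  have heval : ∀ (i : ℕ) (h : i + 1 < n), e i = s(p[i]'(by omega), p[i+1]'h) := by
    intro i h; simp only [he, dif_pos h]
  have heM : ∀ (i : ℕ), i + 1 < n → (e i ∈ M ↔ Odd i) := by
    intro i h; rw [heval i h]; exact hNF i h
  have hemem : ∀ (i : ℕ) (h : i + 1 < n) (w : V),
      w ∈ e i ↔ (w = p[i]'(by omega) ∨ w = p[i+1]'h) := by
    intro i h w; rw [heval i h]; exact Sym2.mem_iff
  have hinj : ∀ i j : ℕ, i + 1 < n → j + 1 < n → e i = e j → i = j := by
    intro i j hi hj hij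
    rw [heval i hi, heval j hj, Sym2.eq_iff] at hij
    rcases hij with ⟨h1, h2⟩ | ⟨h1, h2⟩
    · exact nodup_getElem_inj hnd (by omega) (by omega) h1
    · have e1 : i = j + 1 := nodup_getElem_inj hnd (by omega) (by omega) h1
      have e2 : i + 1 = j := nodup_getElem_inj hnd (by omega) (by omega) h2
      omega
  -- the new matching
  set Io : Set ℕ := {i | i + 1 < n ∧ Odd i} with hIo
  set Ie : Set ℕ := {i | i + 1 < n ∧ Even i} with hIe
  set S : Set (Sym2 V) := e '' Io with hS
  set S' : Set (Sym2 V) := e '' Ie with hS'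
  have hSsub : S ⊆ M := by
    rintro x ⟨i, ⟨hi1, hi2⟩, rfl⟩
    exact (heM i hi1).mpr hi2
  have hS'M : ∀ x ∈ S', x ∉ M := by
    rintro x ⟨i, ⟨hi1, hi2⟩, rfl⟩ hmem
    rw [heM i hi1, ← Nat.not_even_iff_odd] at hmem
    exact hmem hi2
  have hMuniq : ∀ f ∈ M, ∀ g ∈ M, ∀ w : V, w ∈ f → w ∈ g → f = g := by
    intro f hf g hg w hwf hwg
    by_contra hne
    exact hm.2 f hf g hg hne w hwf hwg
  -- endpoints are p[0] and p[n-1]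
  -- the matched edge at an interior path vertex is a path edge in S
  have hmatched : ∀ (k : ℕ) (hk : k < n), ∀ f ∈ M, (p[k]'hk) ∈ f →
      ∃ i, (i + 1 < n ∧ Odd i) ∧ f = e i ∧ (k = i ∨ k = i + 1) := by
    intro k hk f hf hwf
    rcases Nat.even_or_odd k with hke | hko
    · -- k even: matched edge must be e (k-1), k > 0
      have hk0 : k ≠ 0 := by
        rintro rfl
        exact hum ⟨f, hf, by rwa [hu0] at hwf⟩
      have hkm : k - 1 + 1 < n := by omega
      have hek : e (k-1) ∈ M := (heM _ hkm).mpr (by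
        obtain ⟨m, hm'⟩ := hke
        refine ⟨m - 1, by omega⟩)
      have hwk : (p[k]'hk) ∈ e (k-1) := by
        rw [hemem _ hkm]
        right
        congr 1
        omega
      refine ⟨k - 1, ⟨hkm, ?_⟩, hMuniq f hf _ hek _ hwf hwk, by omega⟩
      obtain ⟨m, hm'⟩ := hke; exact ⟨m - 1, by omega⟩
    · -- k odd: matched edge is e k if k+1 < n; k = n-1 impossible (v unmatched)
      have hkn : k ≠ n - 1 := by
        rintro h
        refine hvm ⟨f, hf, ?_⟩
        rw [← hv0]
        convert hwf using 2
        omega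
      have hkm : k + 1 < n := by omega
      have hek : e k ∈ M := (heM _ hkm).mpr hko
      have hwk : (p[k]'hk) ∈ e k := by
        rw [hemem _ hkm]; left; rfl
      exact ⟨k, ⟨hkm, hko⟩, hMuniq f hf _ hek _ hwf hwk, Or.inl rfl⟩
  set M' : Set (Sym2 V) := (M \ S) ∪ S' with hM'
  have huniq : ∀ f ∈ M', ∀ g ∈ M', ∀ w : V, w ∈ f → w ∈ g → f = g := by
    have hcross : ∀ f ∈ M \ S, ∀ g ∈ S', ∀ w : V, w ∈ f → w ∈ g → False := by
      rintro f ⟨hfM, hfS⟩ g ⟨i, ⟨hi1, hi2⟩, rfl⟩ w hwf hwg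
      rw [hemem _ hi1] at hwg
      rcases hwg with rfl | rfl
      · obtain ⟨i', ⟨hi'1, hi'2⟩, hfe, hii'⟩ := hmatched i (by omega) f hfM hwf
        exact hfS ⟨i', ⟨hi'1, hi'2⟩, hfe.symm⟩
      · obtain ⟨i', ⟨hi'1, hi'2⟩, hfe, hii'⟩ := hmatched (i+1) (by omega) f hfM hwf
        exact hfS ⟨i', ⟨hi'1, hi'2⟩, hfe.symm⟩
    rintro f (hf | hf) g (hg | hg) w hwf hwg
    · exact hMuniq f hf.1 g hg.1 w hwf hwg
    · exact absurd (hcross f hf g hg w hwf hwg) not_false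
    · exact absurd (hcross g hg f hf w hwg hwf) not_false
    · obtain ⟨i, ⟨hi1, hi2⟩, rfl⟩ := hf
      obtain ⟨j, ⟨hj1, hj2⟩, rfl⟩ := hg
      rw [hemem _ hi1] at hwf
      rw [hemem _ hj1] at hwg
      have hij : i = j := by
        rcases hwf with rfl | h1 <;> rcases hwg with h2 | h2
        · exact nodup_getElem_inj hnd (by omega) (by omega) h2
        · have hh := nodup_getElem_inj hnd (by omega) (by omega) h2
          obtain ⟨mi, hmi⟩ := hi2
          obtain ⟨mj, hmj⟩ := hj2
          omega
        · have hh := nodup_getElem_inj hnd (by omega) (by omega) (h1.symm.trans h2)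
          obtain ⟨mi, hmi⟩ := hi2
          obtain ⟨mj, hmj⟩ := hj2
          omega
        · have hh := nodup_getElem_inj hnd (by omega) (by omega) (h1.symm.trans h2)
          omega
      rw [hij]
  have hmatch' : IsMatchingIn G M' := by
    constructor
    · rintro x (hx | ⟨i, ⟨hi1, _⟩, rfl⟩)
      · exact hm.1 hx.1
      · rw [heval i hi1, SimpleGraph.mem_edgeSet]
        exact chain'_iff_getElem.mp hadj i hi1
    · intro f hf g hg hne w hwf hwg
      exact hne (huniq f hf g hg w hwf hwg)
  refine ⟨M', hmatch', ?_⟩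
  -- cardinalities
  have hIofin : Io.Finite := Set.Finite.subset (Set.finite_Iio n)
    (fun x hx => Set.mem_Iio.mpr (by have h := hx.1; omega))
  have hIefin : Ie.Finite := Set.Finite.subset (Set.finite_Iio n)
    (fun x hx => Set.mem_Iio.mpr (by have h := hx.1; omega))
  have hinjIo : Set.InjOn e Io := fun i hi j hj hij => hinj i j hi.1 hj.1 hij
  have hinjIe : Set.InjOn e Ie := fun i hi j hj hij => hinj i j hi.1 hj.1 hij
  have hIoeq : Io = ↑((Finset.range (n-1)).filter (fun i => Odd i)) := by
    ext i; simp [hIo]; intro _; omega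
  have hIeeq : Ie = ↑((Finset.range (n-1)).filter (fun i => Even i)) := by
    ext i; simp [hIe]; intro _; omega
  have hScard : S.ncard = (n-1) / 2 := by
    rw [hS, Set.ncard_image_of_injOn hinjIo, hIoeq, Set.ncard_coe_finset, card_filter_odd]
  have hS'card : S'.ncard = n / 2 := by
    rw [hS', Set.ncard_image_of_injOn hinjIe, hIeeq, Set.ncard_coe_finset, card_filter_even]
    congr 1
    omega
  have hneven : Even n := by
    rw [pathEdges_length] at hodd
    rcases Nat.even_or_odd n with h | h
    · exact h
    · exfalso
      obtain ⟨m, h1⟩ := hodd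
      obtain ⟨m', h2⟩ := h
      omega
  have hdisj : Disjoint (M \ S) S' := by
    rw [Set.disjoint_right]
    intro x hx hx'
    exact hS'M x hx hx'.1
  have hMS : (M \ S).ncard = M.ncard - S.ncard := Set.ncard_diff hSsub (Set.toFinite _)
  have hSle : S.ncard ≤ M.ncard := Set.ncard_le_ncard hSsub (Set.toFinite _)
  have hcard : M'.ncard = (M.ncard - S.ncard) + S'.ncard := by
    rw [hM', Set.ncard_union_eq hdisj (Set.toFinite _) (Set.toFinite _), hMS]
  rw [hcard, hScard, hS'card]
  obtain ⟨m, hm'⟩ := hneven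
  rw [hScard] at hSle
  omega

end AddVtx

namespace AddVtx

variable {G : SimpleGraph V} {side : V → Bool} {M : Set (Sym2 V)}

lemma chain'_junction {α : Type*} {R : α → α → Prop} {x y : α} {t : List α}
    (h : List.Chain' R (x :: t)) (hy : t.head? = some y) : R x y := by
  cases t with
  | nil => simp at hy
  | cons b t' =>
    simp only [List.head?_cons, Option.some_inj] at hy
    subst hy
    exact (List.isChain_cons_cons.mp h).1

lemma NF_of_altpath (hbip : IsBipartiteWith G side) {p : List V} {u v : V}
    (hpath : IsAltPath G M u v p) (hum : ¬ IsMatchedBy M u) :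
    ∀ (i : ℕ) (h : i + 1 < p.length), (s(p[i]'(by omega), p[i+1]'h) ∈ M ↔ Odd i) := by
  have hrc := rchain_of_altpath hbip hpath hum
  rw [rchain_iff_parity hbip hpath.1] at hrc
  obtain ⟨h0, hu0⟩ := head?_getElem hpath.2.2.2.1
  intro i h
  have := hrc i h
  rw [hu0] at this
  rw [this, ← Nat.not_even_iff_odd]
  tauto

/-- There is no vertex which is both even and odd (for a maximum matching). -/
lemma not_even_and_odd [Fintype V] (hbip : IsBipartiteWith G side)
    (hM : IsMaxMatching G M) {v : V}
    (he : EvenVtx G M v) (ho : OddVtx G M v) : False := by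
  obtain ⟨u2, q2, hum2, hq2, heven⟩ := he
  obtain ⟨u1, q1, hum1, hq1, hodd⟩ := ho
  have hpar2 := parity_iff hbip hq2.1 hq2.2.2.2.1 hq2.2.2.2.2
  have hpar1 := parity_iff hbip hq1.1 hq1.2.2.2.1 hq1.2.2.2.2
  have hs2 : side u2 = side v := hpar2.mp heven
  have hs1 : side u1 ≠ side v := fun h => (Nat.not_even_iff_odd.mpr hodd) (hpar1.mpr h)
  have contra : ∀ M' : Set (Sym2 V), IsMatchingIn G M' → M.ncard < M'.ncard → False := by
    intro M' h1 h2
    have := hM.2 M' h1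
    omega
  obtain ⟨hl2, hq2last⟩ := getLast?_getElem hq2.2.2.2.2
  by_cases hlen : q2.length ≤ 1
  · -- q2 = [v], so v is unmatched and q1 is augmenting
    obtain ⟨h0, hq20⟩ := head?_getElem hq2.2.2.2.1
    have : u2 = v := by
      rw [← hq20, ← hq2last]
      congr 1
      omega
    subst this
    obtain ⟨M', hM'1, hM'2⟩ := augment hbip hM.1 hq1 hum1 hum2 hodd
    exact contra M' hM'1 hM'2
  · push_neg at hlen
    have hrc2 := rchain_of_altpath hbip hq2 hum2
    have hrc1 := rchain_of_altpath hbip hq1 hum1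
    have hflipadj : List.Chain' G.Adj q2.reverse :=
      List.isChain_reverse.mpr (chain'_imp₂ hq2.1 hq2.1 fun x y h _ => h.symm)
    have hfliprc : List.Chain' (Rrel M side (side u1)) q2.reverse := by
      refine List.isChain_reverse.mpr (chain'_imp₂ hq2.1 hrc2 fun x y hadj hr => ?_)
      have hr' : s(x, y) ∈ M ↔ side x ≠ side u2 := hr
      show s(y, x) ∈ M ↔ side y ≠ side u1
      rw [show (s(y, x) : Sym2 V) = s(x, y) from Sym2.eq_swap, hr']
      have hxy := hbip x y hadj
      have h12 : side u1 ≠ side u2 := fun h => hs1 (h.trans hs2)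
      cases h1 : side x <;> cases h2 : side y <;> cases h3 : side u1 <;>
        cases h4 : side u2 <;> simp_all
    have hwh : q2.reverse.head? = some v := by rw [List.head?_reverse]; exact hq2.2.2.2.2
    have hwg : q2.reverse.getLast? = some u2 := by
      rw [List.getLast?_reverse]; exact hq2.2.2.2.1
    obtain ⟨tw, hw⟩ : ∃ tw, q2.reverse = v :: tw := by
      cases hq : q2.reverse with
      | nil => rw [hq] at hwh; simp at hwh
      | cons b t =>
        rw [hq] at hwh
        simp only [List.head?_cons, Option.some_inj] at hwh
        exact ⟨t, by rw [hwh]⟩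
    obtain ⟨y, tw', hw'⟩ : ∃ y tw', tw = y :: tw' := by
      cases htw : tw with
      | nil =>
        exfalso
        have := congrArg List.length hw
        rw [htw] at this
        simp at this
        omega
      | cons y t => exact ⟨y, t, rfl⟩
    subst hw'
    rw [hw] at hflipadj hfliprc hwg
    -- the spliced walk
    obtain ⟨hql1, hq1last⟩ := getLast?_getElem hq1.2.2.2.2
    set z : List V := q1 ++ (y :: tw') with hz
    have hzadj : List.Chain' G.Adj z := by
      refine List.isChain_append.mpr ?_
      exact ⟨hq1.1, (List.isChain_cons_cons.mp hflipadj).2, by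
        intro a ha b hb
        rw [Option.mem_def, hq1.2.2.2.2, Option.some_inj] at ha
        rw [Option.mem_def, List.head?_cons, Option.some_inj] at hb
        subst ha; subst hb
        exact (List.isChain_cons_cons.mp hflipadj).1⟩
    have hzrc : List.Chain' (Rrel M side (side u1)) z := by
      refine List.isChain_append.mpr ?_
      exact ⟨hrc1, (List.isChain_cons_cons.mp hfliprc).2, by
        intro a ha b hb
        rw [Option.mem_def, hq1.2.2.2.2, Option.some_inj] at ha
        rw [Option.mem_def, List.head?_cons, Option.some_inj] at hb
        subst ha; subst hb
        exact (List.isChain_cons_cons.mp hfliprc).1⟩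
    have hzh : z.head? = some u1 := by
      rw [hz, List.head?_append, hq1.2.2.2.1]
      simp
    have hzg : z.getLast? = some u2 := by
      rw [hz, List.getLast?_append]
      rw [List.getLast?_cons_cons] at hwg
      rw [hwg]
      simp
    obtain ⟨q, hq, hparq⟩ := walk_to_path hbip hzadj hzrc hzh hzg
    have hoddq : Odd (pathEdges q).length := by
      rw [← Nat.not_even_iff_odd]
      intro hev
      have h12 := hparq.mp hev
      exact hs1 (h12.trans hs2)
    obtain ⟨M', hM'1, hM'2⟩ := augment hbip hM.1 hq hum1 hum2 hoddq
    exact contra M' hM'1 hM'2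

/-- Extending an alternating path by one compatible edge. -/
lemma extend_walk (hbip : IsBipartiteWith G side) {u v x : V} {p : List V}
    (hpath : IsAltPath G M u v p) (hum : ¬ IsMatchedBy M u)
    (hadj : G.Adj v x) (hmem : s(v, x) ∈ M ↔ side v ≠ side u) :
    (side x = side u → EvenVtx G M x) ∧ (side x ≠ side u → OddVtx G M x) := by
  have hrc := rchain_of_altpath hbip hpath hum
  set z : List V := p ++ [x] with hz
  have hjun : ∀ {T : V → V → Prop}, T v x →
      ∀ a ∈ p.getLast?, ∀ b ∈ ([x] : List V).head?, T a b := by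
    intro T hT a ha b hb
    rw [Option.mem_def, hpath.2.2.2.2, Option.some_inj] at ha
    rw [Option.mem_def, List.head?_cons, Option.some_inj] at hb
    subst ha; subst hb; exact hT
  have hzadj : List.Chain' G.Adj z :=
    List.isChain_append.mpr ⟨hpath.1, by simp, hjun hadj⟩
  have hzrc : List.Chain' (Rrel M side (side u)) z :=
    List.isChain_append.mpr ⟨hrc, by simp, hjun hmem⟩
  have hzh : z.head? = some u := by
    rw [hz, List.head?_append, hpath.2.2.2.1]; simp
  have hzg : z.getLast? = some x := by
    rw [hz, List.getLast?_append]; simp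
  exact ⟨fun hs => evenVtx_of_walk hbip hzadj hzrc hzh hzg hum hs,
    fun hs => oddVtx_of_walk hbip hzadj hzrc hzh hzg hum hs⟩

/-- L5: the matching partner of an odd vertex is even. -/
lemma even_of_odd_matched (hbip : IsBipartiteWith G side) (hm : IsMatchingIn G M)
    {x y : V} (ho : OddVtx G M x) (hmem : s(x, y) ∈ M) : EvenVtx G M y := by
  obtain ⟨u, p, hum, hpath, hodd⟩ := ho
  have hpar := parity_iff hbip hpath.1 hpath.2.2.2.1 hpath.2.2.2.2
  have hsx : side x ≠ side u := fun h =>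
    (Nat.not_even_iff_odd.mpr hodd) (hpar.mpr h.symm)
  have hadj : G.Adj x y := (SimpleGraph.mem_edgeSet G).mp (hm.1 hmem)
  have hsy : side y = side u := by
    have := hbip x y hadj
    cases h1 : side x <;> cases h2 : side y <;> cases h3 : side u <;> simp_all
  exact (extend_walk hbip hpath hum hadj (by simp [hmem, hsx])).1 hsy

/-- L3: a non-matching neighbour of an even vertex is odd. -/
lemma odd_of_even_adj (hbip : IsBipartiteWith G side)
    {x y : V} (he : EvenVtx G M y) (hadj : G.Adj y x) (hmem : s(y, x) ∉ M) :
    OddVtx G M x := by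
  obtain ⟨u, p, hum, hpath, heven⟩ := he
  have hpar := parity_iff hbip hpath.1 hpath.2.2.2.1 hpath.2.2.2.2
  have hsy : side y = side u := (hpar.mp heven).symm
  have hsx : side x ≠ side u := by
    have := hbip y x hadj
    cases h1 : side x <;> cases h2 : side y <;> cases h3 : side u <;> simp_all
  exact (extend_walk hbip hpath hum hadj (by simp [hmem, hsy])).2 hsx

/-- L4: the matching partner of an even vertex is odd. -/
lemma odd_of_even_matched (hbip : IsBipartiteWith G side) (hm : IsMatchingIn G M)
    {x y : V} (he : EvenVtx G M y) (hmem : s(x, y) ∈ M) : OddVtx G M x := by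
  obtain ⟨u, q, hum, hpath, heven⟩ := he
  obtain ⟨hadj, hnd, halt, hh, hg⟩ := hpath
  obtain ⟨h0, hq0⟩ := head?_getElem hh
  obtain ⟨hl, hqlast⟩ := getLast?_getElem hg
  have hymem : y ∈ s(x, y) := Sym2.mem_mk_right x y
  by_cases hlen : q.length ≤ 1
  · -- y = u unmatched, contradiction
    exfalso
    have huy : u = y := by rw [← hq0, ← hqlast]; congr 1; omega
    exact hum ⟨_, hmem, huy ▸ hymem⟩
  · push_neg at hlen
    set n := q.length with hn
    have hNF := NF_of_altpath hbip ⟨hadj, hnd, halt, hh, hg⟩ hum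
    have hnodd : Odd n := by
      rw [pathEdges_length] at heven
      rw [← Nat.not_even_iff_odd]
      intro ⟨m, hm'⟩
      obtain ⟨m', hm''⟩ := heven
      omega
    have hlastM : s(q[n-2]'(by omega), q[n-1]'(by omega)) ∈ M := by
      have h22 := (hNF (n-2) (by omega)).mpr
        (by obtain ⟨m, hm'⟩ := hnodd; exact ⟨m-1, by omega⟩)
      have hidx : n - 2 + 1 = n - 1 := by omega
      simp only [hidx] at h22
      exact h22
    have huniq : s(x, y) = s(q[n-2]'(by omega), q[n-1]'(by omega)) := by
      by_contra hne
      exact hm.2 _ hmem _ hlastM hne y hymem (by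
        rw [Sym2.mem_iff]
        right
        rw [hqlast])
    have hxq : x = q[n-2]'(by omega) := by
      rw [Sym2.eq_iff] at huniq
      rcases huniq with ⟨h1, h2⟩ | ⟨h1, h2⟩
      · exact h1
      · exfalso
        have hxy : x ≠ y := by
          intro h
          exact (G.loopless.irrefl x) (by
            have := (SimpleGraph.mem_edgeSet G).mp (hm.1 hmem)
            rwa [← h] at this)
        exact hxy (by rw [h1, hqlast])
    -- the path with the last vertex dropped
    set q' := q.dropLast with hq'
    have hq'len : q'.length = n - 1 := by rw [hq', List.length_dropLast]
    have hq'adj : List.Chain' G.Adj q' := hadj.prefix (List.dropLast_prefix q)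
    have hq'nd : q'.Nodup := (List.dropLast_sublist q).nodup hnd
    have hrc := rchain_of_altpath hbip ⟨hadj, hnd, halt, hh, hg⟩ hum
    have hq'rc : List.Chain' (Rrel M side (side u)) q' :=
      hrc.prefix (List.dropLast_prefix q)
    have hq'get : ∀ (i : ℕ) (h : i < q'.length), q'[i]'h = q[i]'(by omega) := by
      intro i h
      exact List.getElem_dropLast (xs := q) (i := i) (by rw [← hq']; exact h)
    have hq'h : q'.head? = some u := by
      rw [List.head?_eq_getElem?, List.getElem?_eq_getElem (by omega : 0 < q'.length)]
      rw [hq'get 0 (by omega), hq0]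
    have hq'g : q'.getLast? = some x := by
      rw [List.getLast?_eq_getElem?, List.getElem?_eq_getElem
        (by omega : q'.length - 1 < q'.length)]
      rw [hq'get _ (by omega), hxq]
      congr 2
      omega
    have hq'alt := alt_of_rchain hbip hq'adj hq'rc
    refine ⟨u, q', hum, ⟨hq'adj, hq'nd, hq'alt, hq'h, hq'g⟩, ?_⟩
    rw [pathEdges_length, hq'len]
    obtain ⟨m, hm'⟩ := hnodd
    exact ⟨m - 1, by omega⟩

lemma odd_matched [Fintype V] (hbip : IsBipartiteWith G side)
    (hM : IsMaxMatching G M) {v : V} (ho : OddVtx G M v) : IsMatchedBy M v := by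
  by_contra hum
  exact not_even_and_odd hbip hM (evenVtx_of_unmatched hum) ho

lemma unreachable_matched {v : V} (hu : UnreachableVtx G M v) : IsMatchedBy M v := by
  by_contra hum
  have he := evenVtx_of_unmatched (M := M) (G := G) hum
  obtain ⟨u, p, h1, h2, h3⟩ := he
  exact hu ⟨u, p, h1, h2⟩

end AddVtx

namespace AddVtx

variable {G : SimpleGraph V} {side : V → Bool} {M : Set (Sym2 V)}

/-- The vertex cover associated with a maximum matching. -/
def InC (G : SimpleGraph V) (side : V → Bool) (M : Set (Sym2 V)) (v : V) : Prop :=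
  OddVtx G M v ∨ (UnreachableVtx G M v ∧ side v = true)

lemma even_of_labels {v : V} (hno : ¬ OddVtx G M v) (hnu : ¬ UnreachableVtx G M v) :
    EvenVtx G M v := by
  rw [UnreachableVtx, not_not] at hnu
  obtain ⟨u, p, h1, h2⟩ := hnu
  rcases Nat.even_or_odd (pathEdges p).length with he | ho
  · exact ⟨u, p, h1, h2, he⟩
  · exact absurd ⟨u, p, h1, h2, ho⟩ hno

lemma not_unreachable_of_odd {v : V} (ho : OddVtx G M v) : ¬ UnreachableVtx G M v := by
  obtain ⟨u, p, h1, h2, _⟩ := ho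
  exact fun h => h ⟨u, p, h1, h2⟩

lemma not_unreachable_of_even {v : V} (he : EvenVtx G M v) : ¬ UnreachableVtx G M v := by
  obtain ⟨u, p, h1, h2, _⟩ := he
  exact fun h => h ⟨u, p, h1, h2⟩

lemma odd_of_even_nbr (hbip : IsBipartiteWith G side) (hm : IsMatchingIn G M)
    {x y : V} (he : EvenVtx G M x) (hadj : G.Adj x y) : OddVtx G M y := by
  by_cases hmem : s(x, y) ∈ M
  · exact odd_of_even_matched hbip hm he (Sym2.eq_swap ▸ hmem)
  · exact odd_of_even_adj hbip he hadj hmem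

lemma cover_G (hbip : IsBipartiteWith G side) (hm : IsMatchingIn G M)
    {x y : V} (hadj : G.Adj x y) : InC G side M x ∨ InC G side M y := by
  by_cases hox : OddVtx G M x
  · exact Or.inl (Or.inl hox)
  by_cases hux : UnreachableVtx G M x
  · cases hsx : side x with
    | true => exact Or.inl (Or.inr ⟨hux, hsx⟩)
    | false =>
      -- y is on the true side; y cannot be even (else x would be odd)
      right
      by_cases hoy : OddVtx G M y
      · exact Or.inl hoy
      right
      refine ⟨?_, ?_⟩
      · intro hreach
        have hey : EvenVtx G M y := even_of_labels hoy (by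
          rintro h; exact h hreach)
        exact not_unreachable_of_odd
          (odd_of_even_nbr hbip hm hey hadj.symm) hux
      · have := hbip x y hadj
        cases h : side y
        · rw [hsx, h] at this; simp at this
        · rfl
  · -- x is even, so y is odd
    have hex : EvenVtx G M x := even_of_labels hox hux
    exact Or.inr (Or.inl (odd_of_even_nbr hbip hm hex hadj))

lemma inC_not_both [Fintype V] (hbip : IsBipartiteWith G side)
    (hM : IsMaxMatching G M) {x y : V} (hmem : s(x, y) ∈ M)
    (hx : InC G side M x) (hy : InC G side M y) : False := by
  have hadj : G.Adj x y := (SimpleGraph.mem_edgeSet G).mp (hM.1.1 hmem)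
  rcases hx with hx | ⟨hx, hsx⟩ <;> rcases hy with hy | ⟨hy, hsy⟩
  · exact not_even_and_odd hbip hM (even_of_odd_matched hbip hM.1 hx hmem) hy
  · exact not_unreachable_of_even (even_of_odd_matched hbip hM.1 hx hmem) hy
  · exact not_unreachable_of_even
      (even_of_odd_matched hbip hM.1 hy (Sym2.eq_swap ▸ hmem)) hx
  · exact (hbip x y hadj) (hsx.trans hsy.symm)

lemma inC_matched [Fintype V] (hbip : IsBipartiteWith G side)
    (hM : IsMaxMatching G M) {v : V} (hv : InC G side M v) : IsMatchedBy M v := by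
  rcases hv with hv | ⟨hv, _⟩
  · exact odd_matched hbip hM hv
  · exact unreachable_matched hv

/-- Any matching of a graph covered by the cover `InC` has at most `M.ncard` edges. -/
lemma matching_le [Fintype V] (hbip : IsBipartiteWith G side)
    (hM : IsMaxMatching G M) {H' : SimpleGraph V}
    (hcov : ∀ x y, H'.Adj x y → InC G side M x ∨ InC G side M y)
    (N' : Set (Sym2 V)) (hN' : IsMatchingIn H' N') : N'.ncard ≤ M.ncard := by
  classical
  have key : ∀ e, ∃ f, e ∈ N' → f ∈ M ∧ ∃ w, w ∈ e ∧ w ∈ f ∧ InC G side M w := by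
    intro e
    by_cases he : e ∈ N'
    · induction e using Sym2.ind with
      | _ x y =>
        have hadj : H'.Adj x y := (SimpleGraph.mem_edgeSet H').mp (hN'.1 he)
        have hc := hcov x y hadj
        rcases hc with hc | hc
        · obtain ⟨f, hf, hwf⟩ := inC_matched hbip hM hc
          exact ⟨f, fun _ => ⟨hf, x, Sym2.mem_mk_left _ _, hwf, hc⟩⟩
        · obtain ⟨f, hf, hwf⟩ := inC_matched hbip hM hc
          exact ⟨f, fun _ => ⟨hf, y, Sym2.mem_mk_right _ _, hwf, hc⟩⟩
    · exact ⟨e, fun h => absurd h he⟩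
  choose g hg using key
  apply Set.ncard_le_ncard_of_injOn g (fun e he => (hg e he).1) _ (Set.toFinite M)
  intro e1 he1 e2 he2 heq
  by_contra hne
  obtain ⟨hf1, w1, hw1e, hw1f, hw1c⟩ := hg e1 he1
  obtain ⟨hf2, w2, hw2e, hw2f, hw2c⟩ := hg e2 he2
  rw [heq] at hw1f
  by_cases hw : w1 = w2
  · subst hw
    exact hN'.2 e1 he1 e2 he2 hne w1 hw1e hw2e
  · have hfe : g e2 = s(w1, w2) :=
      (Sym2.mem_and_mem_iff hw).mp ⟨hw1f, hw2f⟩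
    rw [hfe] at hf2
    exact inC_not_both hbip hM hf2 hw1c hw2c

end AddVtx

/-- Let `H` be obtained from the bipartite graph `G` by adding a new
vertex `a` on the applicant side (modelled as a vertex isolated in `G`) together
with edges from `a` to a set `N` of posts, and let `M` be a maximum matching of
`G`. If every vertex of `N` is odd with respect to `M` in `G`, then `M` is a
maximum matching of `H`, every vertex of `G` keeps its label (even, odd or
unreachable) in `H`, and `a` is even with respect to `M` in `H`. -/
theorem add_vertex_all_odd [Fintype V]
    (G H : SimpleGraph V) (side : V → Bool) (hbip : IsBipartiteWith G side)
    (a : V) (ha : side a = false) (haG : ∀ v, ¬ G.Adj a v)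
    (N : Set V) (hNside : ∀ p ∈ N, side p = true)
    (hH : ∀ u v, H.Adj u v ↔ G.Adj u v ∨ (u = a ∧ v ∈ N) ∨ (v = a ∧ u ∈ N))
    (M : Set (Sym2 V)) (hM : IsMaxMatching G M)
    (hodd : ∀ p ∈ N, OddVtx G M p) :
    IsMaxMatching H M ∧
    (∀ v, v ≠ a →
      (EvenVtx G M v ↔ EvenVtx H M v) ∧
      (OddVtx G M v ↔ OddVtx H M v) ∧
      (UnreachableVtx G M v ↔ UnreachableVtx H M v)) ∧
    EvenVtx H M a := by
  classical
  open AddVtx in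
  have hbipH : IsBipartiteWith H side := by
    intro u v hadj
    rw [hH] at hadj
    rcases hadj with h | ⟨rfl, hv⟩ | ⟨rfl, hu⟩
    · exact hbip u v h
    · rw [ha, hNside v hv]; simp
    · rw [ha, hNside u hu]; simp
  have haM : ∀ e ∈ M, a ∉ e := by
    intro e he hae
    have hG := hM.1.1 he
    induction e using Sym2.ind with
    | _ x y =>
      rw [SimpleGraph.mem_edgeSet] at hG
      rw [Sym2.mem_iff] at hae
      rcases hae with rfl | rfl
      · exact haG y hG
      · exact haG x hG.symm
  have haum : ¬ IsMatchedBy M a := fun ⟨e, he, hae⟩ => haM e he hae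
  have hGH : ∀ {x y : V}, G.Adj x y → H.Adj x y := fun h => (hH _ _).mpr (Or.inl h)
  have altGH : ∀ {u v : V} {p : List V}, IsAltPath G M u v p → IsAltPath H M u v p := by
    rintro u v p ⟨h1, h2, h3, h4, h5⟩
    exact ⟨h1.imp fun {_ _} h => hGH h, h2, h3, h4, h5⟩
  -- the transfer of alternating paths from H to G
  have transfer : ∀ v, v ≠ a → ∀ u (p : List V), ¬ IsMatchedBy M u →
      IsAltPath H M u v p →
      ∃ u' q, ¬ IsMatchedBy M u' ∧ IsAltPath G M u' v q ∧
        (Even (pathEdges q).length ↔ Even (pathEdges p).length) := by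
    intro v hva u p hum hp
    obtain ⟨hadjP, hnd, halt, hu, hv⟩ := hp
    by_cases hap : a ∈ p
    · -- `a` occurs on the path; it must be the very first vertex
      obtain ⟨k, hk, hpk⟩ := List.mem_iff_getElem.mp hap
      obtain ⟨hl0, hvlast⟩ := getLast?_getElem hv
      obtain ⟨hl1, hufirst⟩ := head?_getElem hu
      have hkne : k ≠ p.length - 1 := by
        intro hkk
        apply hva
        rw [← hvlast, ← hpk]
        congr 1
        omega
      have hk0 : k = 0 := by
        by_contra hk0
        obtain ⟨j, rfl⟩ : ∃ j, k = j + 1 := ⟨k - 1, by omega⟩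
        have hjlen : j + 1 + 1 < p.length := by omega
        have hlink := chain'_iff_getElem.mp halt j
          (by rw [pathEdges_length]; omega)
        rw [pathEdges_getElem _ _ (by rw [pathEdges_length]; omega),
          pathEdges_getElem _ _ (by rw [pathEdges_length]; omega)] at hlink
        have hnm1 : s(p[j]'(by omega), p[j+1]'(by omega)) ∉ M := by
          intro hmem
          exact haM _ hmem (by rw [Sym2.mem_iff]; right; rw [hpk])
        have hnm2 : s(p[j+1]'(by omega), p[j+1+1]'hjlen) ∉ M := by
          intro hmem
          exact haM _ hmem (by rw [Sym2.mem_iff]; left; rw [hpk])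
        exact hnm1 (hlink.mpr hnm2)
      -- p = a :: c1 :: t with c1 ∈ N
      obtain ⟨c0, rest, rfl⟩ : ∃ c0 rest, p = c0 :: rest := by
        cases p with
        | nil => simp at hk
        | cons c0 rest => exact ⟨c0, rest, rfl⟩
      have hc0 : c0 = a := by rw [← hpk]; simp [hk0]
      subst hc0
      have hua : u = c0 := by rw [← hufirst]; simp
      obtain ⟨c1, t, rfl⟩ : ∃ c1 t, rest = c1 :: t := by
        cases rest with
        | nil =>
          exfalso
          apply hva
          simp at hvlast
          rw [hvlast]
        | cons c1 t => exact ⟨c1, t, rfl⟩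
      have hnmem : c0 ∉ c1 :: t := (List.nodup_cons.mp hnd).1
      have hadj1 : H.Adj c0 c1 := (List.isChain_cons_cons.mp hadjP).1
      have hc1N : c1 ∈ N := by
        rw [hH] at hadj1
        rcases hadj1 with h | ⟨_, h⟩ | ⟨h, _⟩
        · exact absurd h (haG c1)
        · exact h
        · exact absurd (h ▸ List.mem_cons_self (a := c1) (l := t)) hnmem
      have hsadjH : List.Chain' H.Adj (c1 :: t) := (List.isChain_cons_cons.mp hadjP).2
      have hsadjG : List.Chain' G.Adj (c1 :: t) := by
        refine chain'_iff_getElem.mpr fun i hi => ?_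
        have hH' := chain'_iff_getElem.mp hsadjH i hi
        rw [hH] at hH'
        rcases hH' with h | ⟨h1, _⟩ | ⟨h1, _⟩
        · exact h
        · exact absurd (h1 ▸ List.getElem_mem _) hnmem
        · exact absurd (h1 ▸ List.getElem_mem _) hnmem
      have halts : (pathEdges (c1 :: t)).Chain' (fun e f => (e ∈ M ↔ f ∉ M)) := by
        rw [pathEdges_cons] at halt
        exact halt.tail
      have hQ : ∀ h : 1 < (c1 :: t).length,
          (s((c1 :: t)[0]'(by omega), (c1 :: t)[1]'h) ∈ M ↔
            side ((c1 :: t)[0]'(by omega)) ≠ false) := by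
        intro h
        cases t with
        | nil => simp at h
        | cons b t' =>
          have hfirstnm : s(c0, c1) ∉ M := fun hmem =>
            haM _ hmem (Sym2.mem_mk_left _ _)
          rw [pathEdges_cons, pathEdges_cons] at halt
          have hlink := (List.isChain_cons_cons.mp halt).1
          have hsnd : s(c1, b) ∈ M := by
            by_contra hnm
            exact hfirstnm (hlink.mpr hnm)
          simp only [List.getElem_cons_zero, List.getElem_cons_succ]
          rw [hNside c1 hc1N]
          simp [hsnd]
      have hsrc : List.Chain' (Rrel M side false) (c1 :: t) :=
        rchain_of_alt hbip hsadjG halts false hQ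
      -- the odd path to c1
      obtain ⟨u', q1, hum', hq1, hoddq1⟩ := hodd c1 hc1N
      have hpar1 := parity_iff hbip hq1.1 hq1.2.2.2.1 hq1.2.2.2.2
      have hsu' : side u' = false := by
        have h1 : side u' ≠ side c1 := fun h =>
          (Nat.not_even_iff_odd.mpr hoddq1) (hpar1.mpr h)
        have h2 := hNside c1 hc1N
        cases h3 : side u'
        · rfl
        · rw [h3, h2] at h1; simp at h1
      have hq1rc : List.Chain' (Rrel M side false) q1 := by
        rw [← hsu']
        exact rchain_of_altpath hbip hq1 hum'
      -- the spliced walk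
      have hzadj : List.Chain' G.Adj (q1 ++ t) := by
        refine List.isChain_append.mpr ?_
        refine ⟨hq1.1, hsadjG.tail, fun aa haa bb hbb => ?_⟩
        rw [Option.mem_def, hq1.2.2.2.2, Option.some_inj] at haa
        subst haa
        exact chain'_junction hsadjG hbb
      have hzrc : List.Chain' (Rrel M side false) (q1 ++ t) := by
        refine List.isChain_append.mpr ?_
        refine ⟨hq1rc, hsrc.tail, fun aa haa bb hbb => ?_⟩
        rw [Option.mem_def, hq1.2.2.2.2, Option.some_inj] at haa
        subst haa
        exact chain'_junction hsrc hbb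
      have hzh : (q1 ++ t).head? = some u' := by
        rw [List.head?_append, hq1.2.2.2.1]
        simp
      have hzg : (q1 ++ t).getLast? = some v := by
        have hsg : (([c1] ++ t) : List V).getLast? = some v := by
          rw [List.getLast?_cons_cons] at hv
          exact hv
        rw [List.getLast?_append] at hsg ⊢
        rw [hq1.2.2.2.2]
        simpa using hsg
      obtain ⟨q, hqpath, hqpar⟩ := walk_to_path hbip hzadj hzrc hzh hzg
      refine ⟨u', q, hum', hqpath, ?_⟩
      have hppar := parity_iff hbipH hadjP hu hv
      rw [hua, ha] at hppar
      rw [hsu'] at hqpar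
      rw [hqpar, hppar]
    · -- `a` does not occur; the path lives in G
      have hadjG : List.Chain' G.Adj p := by
        refine chain'_iff_getElem.mpr fun i hi => ?_
        have hH' := chain'_iff_getElem.mp hadjP i hi
        rw [hH] at hH'
        rcases hH' with h | ⟨h1, _⟩ | ⟨h1, _⟩
        · exact h
        · exact absurd (h1 ▸ List.getElem_mem _) hap
        · exact absurd (h1 ▸ List.getElem_mem _) hap
      exact ⟨u, p, hum, ⟨hadjG, hnd, halt, hu, hv⟩, Iff.rfl⟩
  -- cover of H
  have hcovH : ∀ x y, H.Adj x y → InC G side M x ∨ InC G side M y := by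
    intro x y hadj
    rw [hH] at hadj
    rcases hadj with h | ⟨rfl, h⟩ | ⟨rfl, h⟩
    · exact cover_G hbip hM.1 h
    · exact Or.inr (Or.inl (hodd y h))
    · exact Or.inl (Or.inl (hodd x h))
  refine ⟨⟨⟨?_, hM.1.2⟩, fun N' hN' => matching_le hbip hM hcovH N' hN'⟩, ?_, ?_⟩
  · -- M ⊆ H.edgeSet
    intro e he
    have hG := hM.1.1 he
    induction e using Sym2.ind with
    | _ x y =>
      rw [SimpleGraph.mem_edgeSet] at hG ⊢
      exact hGH hG
  · -- labels are preserved
    intro v hva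
    refine ⟨⟨?_, ?_⟩, ⟨?_, ?_⟩, ⟨?_, ?_⟩⟩
    · rintro ⟨u, p, h1, h2, h3⟩
      exact ⟨u, p, h1, altGH h2, h3⟩
    · rintro ⟨u, p, h1, h2, h3⟩
      obtain ⟨u', q, h1', h2', h3'⟩ := transfer v hva u p h1 h2
      exact ⟨u', q, h1', h2', h3'.mpr h3⟩
    · rintro ⟨u, p, h1, h2, h3⟩
      exact ⟨u, p, h1, altGH h2, h3⟩
    · rintro ⟨u, p, h1, h2, h3⟩
      obtain ⟨u', q, h1', h2', h3'⟩ := transfer v hva u p h1 h2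
      refine ⟨u', q, h1', h2', ?_⟩
      rw [← Nat.not_even_iff_odd]
      intro hev
      exact (Nat.not_even_iff_odd.mpr h3) (h3'.mp hev)
    · intro hUG
      rintro ⟨u, p, h1, h2⟩
      obtain ⟨u', q, h1', h2', _⟩ := transfer v hva u p h1 h2
      exact hUG ⟨u', q, h1', h2'⟩
    · intro hUH
      rintro ⟨u, p, h1, h2⟩
      exact hUH ⟨u, p, h1, altGH h2⟩
  · -- `a` is even in H
    exact ⟨a, [a], haum, ⟨by simp [List.Chain', List.isChain_singleton], by simp, by simp [pathEdges, List.Chain', List.isChain_nil], by simp, by simp⟩,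
      by simp [pathEdges]⟩
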